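/- Let (V,μ) be a simple, strongly connected, finite weighted directed graph with Ricci curvature κ ≥ K > 0 and sup_x 𝒟_x ≤ Λ for some Λ ≥ 1 (where 𝒟_x = sup_{y ∈ 𝒩_x} max{d(x,y), d(y,x)}). Then for every probability density ρ with respect to the Perron measure 𝔪, W(𝔪, ρ𝔪) ≤ (Λ/(2K)) Σ_{x,y} |ρ(y) − ρ(x)| 𝔪_{xy}. -/

import Mathlib

open Finset

namespace Chung

variable {V : Type*}

/-- There is a directed path of length `n` from `x` to `y` (edges are pairs of
positive weight). -/
def PathLen (μ : V → V → ℝ) (n : ℕ) (x y : V) : Prop :=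
  ∃ p : ℕ → V, p 0 = x ∧ p n = y ∧ ∀ i < n, 0 < μ (p i) (p (i + 1))

/-- The (non-symmetric) graph distance: the minimal length of a directed path. -/
noncomputable def gdist (μ : V → V → ℝ) (x y : V) : ℝ :=
  (sInf {n : ℕ | PathLen μ n x y} : ℕ)

/-- `(V,μ)` is a simple, strongly connected weighted directed graph. -/
def IsGraph (μ : V → V → ℝ) : Prop :=
  (∀ x y, 0 ≤ μ x y) ∧ (∀ x, μ x x = 0) ∧ (∀ x y, ∃ n, PathLen μ n x y)

variable [Fintype V]

/-- The transition probability kernel `P(x,y) = μ_{xy}/μ(x)`. -/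
noncomputable def ker (μ : V → V → ℝ) (x y : V) : ℝ := μ x y / ∑ z, μ x z

/-- `m` is the Perron (stationary probability) measure of the kernel `P`. -/
def IsPerron (μ : V → V → ℝ) (m : V → ℝ) : Prop :=
  (∀ x, 0 < m x) ∧ (∑ x, m x = 1) ∧ ∀ y, m y = ∑ x, m x * ker μ x y

/-- The mean transition probability kernel `𝒫 = (P + ←P)/2`,
where `←P(x,y) = m(y)P(y,x)/m(x)`. -/
noncomputable def meanKer (μ : V → V → ℝ) (m : V → ℝ) (x y : V) : ℝ :=
  (ker μ x y + m y * ker μ y x / m x) / 2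

variable [DecidableEq V]

/-- The Chung Laplacian `ℒ = I − 𝒫` as a matrix. -/
noncomputable def lapMat (μ : V → V → ℝ) (m : V → ℝ) : Matrix V V ℝ :=
  1 - Matrix.of (meanKer μ m)

/-- The Chung Laplacian applied to a function. -/
noncomputable def lap (μ : V → V → ℝ) (m : V → ℝ) (f : V → ℝ) : V → ℝ :=
  (lapMat μ m).mulVec f

/-- The heat semigroup `P_t = e^{−tℒ}` as a matrix. -/
noncomputable def heatMat (μ : V → V → ℝ) (m : V → ℝ) (t : ℝ) : Matrix V V ℝ :=
  NormedSpace.exp ((-t) • lapMat μ m)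

/-- `P_t f`. -/
noncomputable def heatSG (μ : V → V → ℝ) (m : V → ℝ) (t : ℝ) (f : V → ℝ) : V → ℝ :=
  (heatMat μ m t).mulVec f

/-- The heat kernel measure `p_x^t(y) = m(y)·(P_t δ_x)(y)/m(x)`. -/
noncomputable def heatKer (μ : V → V → ℝ) (m : V → ℝ) (t : ℝ) (x y : V) : ℝ :=
  m y * heatSG μ m t (fun z => if z = x then 1 else 0) y / m x

/-- `π` is a coupling of the probability measures `ν₀` and `ν₁`. -/
def IsCoupling (π : V → V → ℝ) (ν₀ ν₁ : V → ℝ) : Prop :=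
  (∀ x y, 0 ≤ π x y) ∧ (∀ x, ∑ y, π x y = ν₀ x) ∧ (∀ y, ∑ x, π x y = ν₁ y)

/-- Wasserstein distance for the (possibly non-symmetric) cost `d`. -/
noncomputable def wass (d : V → V → ℝ) (ν₀ ν₁ : V → ℝ) : ℝ :=
  sInf {r : ℝ | ∃ π : V → V → ℝ, IsCoupling π ν₀ ν₁ ∧ r = ∑ x, ∑ y, d x y * π x y}

/-- Lipschitz constant with respect to the (non-symmetric) distance `d`. -/
noncomputable def lipConst (d : V → V → ℝ) (f : V → ℝ) : ℝ :=
  sSup {r : ℝ | ∃ x y, x ≠ y ∧ r = (f y - f x) / d x y}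

/-- The Lin–Lu–Yau type Ricci curvature of the directed graph, via the limit-free
formula `κ(x,y) = inf {∇_{xy} ℒf : f 1-Lipschitz, ∇_{xy} f = 1}`. -/
noncomputable def ricci (μ : V → V → ℝ) (m : V → ℝ) (x y : V) : ℝ :=
  sInf {r : ℝ | ∃ f : V → ℝ, (∀ a b, f b - f a ≤ gdist μ a b) ∧
    (f y - f x) / gdist μ x y = 1 ∧
    r = (lap μ m f y - lap μ m f x) / gdist μ x y}


section Aux
lemma gdist_nonneg (μ : V → V → ℝ) (x y : V) : 0 ≤ gdist μ x y := by
  exact_mod_cast Nat.cast_nonneg _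

lemma pathLen_zero (μ : V → V → ℝ) (x : V) : PathLen μ 0 x x :=
  ⟨fun _ => x, rfl, rfl, fun i hi => absurd hi (Nat.not_lt_zero i)⟩

lemma pathLen_zero_iff (μ : V → V → ℝ) (x y : V) : PathLen μ 0 x y ↔ x = y := by
  constructor
  · rintro ⟨p, h0, hn, _⟩; rw [← h0, ← hn]
  · rintro rfl; exact pathLen_zero μ x

lemma gdist_self (μ : V → V → ℝ) (x : V) : gdist μ x x = 0 := by
  have : sInf {n : ℕ | PathLen μ n x x} = 0 :=
    Nat.sInf_eq_zero.2 (Or.inl (pathLen_zero μ x))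
  simp [gdist, this]

lemma pathLen_trans {μ : V → V → ℝ} {n m : ℕ} {x y z : V}
    (h1 : PathLen μ n x y) (h2 : PathLen μ m y z) : PathLen μ (n + m) x z := by
  obtain ⟨p, hp0, hpn, hpe⟩ := h1
  obtain ⟨q, hq0, hqm, hqe⟩ := h2
  refine ⟨fun i => if i < n then p i else q (i - n), ?_, ?_, ?_⟩
  · by_cases h : 0 < n
    · simp [h, hp0]
    · have : n = 0 := by omega
      subst this; simpa [hq0, ← hp0, ← hpn]
  · have : ¬ (n + m < n) := by omega
    simp [this, hqm]
  · intro i hi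
    by_cases h : i + 1 < n
    · have h' : i < n := by omega
      simpa [h, h'] using hpe i h'
    · by_cases h' : i < n
      · have hn' : i + 1 = n := by omega
        have e2 : q (i + 1 - n) = p (i + 1) := by
          have e0 : i + 1 - n = 0 := by omega
          rw [e0, hq0, ← hpn, hn']
        simp only [if_pos h', if_neg h, e2]
        exact hpe i h'
      · have e1 : i + 1 - n = (i - n) + 1 := by omega
        simp only [h, h', if_neg, e1]
        exact hqe (i - n) (by omega)

lemma gdist_exists (hG : IsGraph μ) (x y : V) :
    {n : ℕ | PathLen μ n x y}.Nonempty := hG.2.2 x y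

lemma gdist_nat (hG : IsGraph μ) (x y : V) :
    PathLen μ (sInf {n : ℕ | PathLen μ n x y}) x y :=
  Nat.sInf_mem (gdist_exists hG x y)

lemma gdist_triangle {μ : V → V → ℝ} (hG : IsGraph μ) (x y z : V) :
    gdist μ x z ≤ gdist μ x y + gdist μ y z := by
  have h1 := gdist_nat hG x y
  have h2 := gdist_nat hG y z
  have h3 := pathLen_trans h1 h2
  have : sInf {n : ℕ | PathLen μ n x z} ≤
      sInf {n : ℕ | PathLen μ n x y} + sInf {n : ℕ | PathLen μ n y z} :=
    Nat.sInf_le h3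
  unfold gdist
  exact_mod_cast this

lemma gdist_one_le {μ : V → V → ℝ} (hG : IsGraph μ) {x y : V} (hxy : x ≠ y) :
    1 ≤ gdist μ x y := by
  have h := gdist_nat hG x y
  have : sInf {n : ℕ | PathLen μ n x y} ≠ 0 := by
    intro h0
    rw [h0] at h
    exact hxy ((pathLen_zero_iff μ x y).1 h)
  have : 1 ≤ sInf {n : ℕ | PathLen μ n x y} := Nat.one_le_iff_ne_zero.2 this
  unfold gdist
  exact_mod_cast this

lemma gdist_pos {μ : V → V → ℝ} (hG : IsGraph μ) {x y : V} (hxy : x ≠ y) :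
    0 < gdist μ x y := by linarith [gdist_one_le hG hxy]


section Kern

variable {μ : V → V → ℝ} {m : V → ℝ}

lemma rowsum_pos (hG : IsGraph μ) {x : V} (htwo : ∃ y : V, y ≠ x) :
    0 < ∑ z, μ x z := by
  obtain ⟨y, hy⟩ := htwo
  obtain ⟨n, p, hp0, hpn, hpe⟩ := hG.2.2 x y
  have hn : n ≠ 0 := by
    rintro rfl
    exact hy (hpn.symm.trans hp0)
  have h1 : 0 < μ x (p 1) := by
    have := hpe 0 (Nat.pos_of_ne_zero hn)
    rwa [hp0] at this
  calc (0:ℝ) < μ x (p 1) := h1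
    _ ≤ ∑ z, μ x z := Finset.single_le_sum (fun z _ => hG.1 x z) (Finset.mem_univ (p 1))

lemma ker_nonneg (hG : IsGraph μ) (x y : V) : 0 ≤ ker μ x y :=
  div_nonneg (hG.1 x y) (Finset.sum_nonneg fun z _ => hG.1 x z)

lemma ker_rowsum {x : V} (hrow : 0 < ∑ z, μ x z) : ∑ y, ker μ x y = 1 := by
  unfold ker
  rw [← Finset.sum_div, div_self hrow.ne']

lemma meanKer_nonneg (hG : IsGraph μ) (hm : ∀ x, 0 < m x) (x y : V) :
    0 ≤ meanKer μ m x y := by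
  unfold meanKer
  have h1 := ker_nonneg hG x y
  have h2 := ker_nonneg hG y x
  have h3 := (hm y).le
  have h4 := (hm x).le
  positivity

lemma meanKer_rowsum (hP : IsPerron μ m) (hrow : ∀ x, 0 < ∑ z, μ x z) (x : V) :
    ∑ y, meanKer μ m x y = 1 := by
  unfold meanKer
  rw [← Finset.sum_div, Finset.sum_add_distrib]
  have h1 : ∑ y, ker μ x y = 1 := ker_rowsum (hrow x)
  have h2 : ∑ y, m y * ker μ y x / m x = 1 := by
    rw [← Finset.sum_div]
    rw [← hP.2.2 x]
    exact div_self (hP.1 x).ne'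
  rw [h1, h2]
  norm_num

lemma w_eq (hm : ∀ x, 0 < m x) (x y : V) :
    m x * meanKer μ m x y = (m x * ker μ x y + m y * ker μ y x) / 2 := by
  unfold meanKer
  have hx := (hm x).ne'
  field_simp [hx]

lemma w_symm (hm : ∀ x, 0 < m x) (x y : V) :
    m x * meanKer μ m x y = m y * meanKer μ m y x := by
  rw [w_eq hm, w_eq hm]
  ring

lemma w_nonneg (hG : IsGraph μ) (hm : ∀ x, 0 < m x) (x y : V) :
    0 ≤ m x * meanKer μ m x y :=
  mul_nonneg (hm x).le (meanKer_nonneg hG hm x y)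

lemma w_rowsum (hP : IsPerron μ m) (hrow : ∀ x, 0 < ∑ z, μ x z) (x : V) :
    ∑ y, m x * meanKer μ m x y = m x := by
  rw [← Finset.mul_sum, meanKer_rowsum hP hrow, mul_one]

lemma w_pos_edge (hG : IsGraph μ) (hm : ∀ x, 0 < m x) {x y : V}
    (h : 0 < m x * meanKer μ m x y) : 0 < μ x y ∨ 0 < μ y x := by
  by_contra hcon
  push_neg at hcon
  have h1 : μ x y = 0 := le_antisymm hcon.1 (hG.1 x y)
  have h2 : μ y x = 0 := le_antisymm hcon.2 (hG.1 y x)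
  have : meanKer μ m x y = 0 := by
    unfold meanKer ker
    rw [h1, h2]
    simp
  rw [this, mul_zero] at h
  exact lt_irrefl 0 h

end Kern


section WassBasic

variable {d π ν₀ ν₁ : V → V → ℝ}

lemma cost_nonneg {d π : V → V → ℝ} (hd : ∀ x y, 0 ≤ d x y) (hπ : ∀ x y, 0 ≤ π x y) :
    0 ≤ ∑ x, ∑ y, d x y * π x y :=
  Finset.sum_nonneg fun x _ => Finset.sum_nonneg fun y _ =>
    mul_nonneg (hd x y) (hπ x y)

lemma wassSet_bddBelow {d : V → V → ℝ} (hd : ∀ x y, 0 ≤ d x y) (ν₀ ν₁ : V → ℝ) :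
    BddBelow {r : ℝ | ∃ π : V → V → ℝ, IsCoupling π ν₀ ν₁ ∧ r = ∑ x, ∑ y, d x y * π x y} := by
  refine ⟨0, fun r hr => ?_⟩
  obtain ⟨π, hπ, rfl⟩ := hr
  exact cost_nonneg hd hπ.1

lemma wass_le_cost {d π : V → V → ℝ} {ν₀ ν₁ : V → ℝ} (hd : ∀ x y, 0 ≤ d x y)
    (hπ : IsCoupling π ν₀ ν₁) : wass d ν₀ ν₁ ≤ ∑ x, ∑ y, d x y * π x y :=
  csInf_le (wassSet_bddBelow hd ν₀ ν₁) ⟨π, hπ, rfl⟩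

lemma isCoupling_prod {ν₀ ν₁ : V → ℝ} (h0 : ∀ x, 0 ≤ ν₀ x) (h1 : ∀ x, 0 ≤ ν₁ x)
    (hs0 : ∑ x, ν₀ x = 1) (hs1 : ∑ x, ν₁ x = 1) :
    IsCoupling (fun x y => ν₀ x * ν₁ y) ν₀ ν₁ := by
  refine ⟨fun x y => mul_nonneg (h0 x) (h1 y), fun x => ?_, fun y => ?_⟩
  · rw [← Finset.mul_sum, hs1, mul_one]
  · rw [← Finset.sum_mul, hs0, one_mul]

end WassBasic

/-! ### Residual walks for duality -/

/-- Residual reachability for the optimal coupling `π`, starting from the column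
vertex `y₀`.  `Sum.inl x` is a row vertex, `Sum.inr y` a column vertex. -/
inductive Reach (d π : V → V → ℝ) (y₀ : V) : (V ⊕ V) → ℝ → Prop
  | base : Reach d π y₀ (Sum.inr y₀) 0
  | back {y : V} {c : ℝ} {x : V} : Reach d π y₀ (Sum.inr y) c → 0 < π x y →
      Reach d π y₀ (Sum.inl x) (c - d x y)
  | fwd {x : V} {c : ℝ} (z : V) : Reach d π y₀ (Sum.inl x) c →
      Reach d π y₀ (Sum.inr z) (c + d x z)

variable [DecidableEq V]

/-- indicator function on pairs -/
noncomputable def ind (x y : V) : V → V → ℝ := fun a b => if a = x ∧ b = y then 1 else 0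

lemma ind_nonneg (x y a b : V) : 0 ≤ ind x y a b := by
  unfold ind; split <;> norm_num

lemma sum_ind_right (x y a : V) : ∑ b, ind x y a b = if a = x then 1 else 0 := by
  unfold ind
  by_cases h : a = x
  · simp [h]
  · simp [h]

lemma sum_ind_left (x y b : V) : ∑ a, ind x y a b = if b = y then 1 else 0 := by
  unfold ind
  by_cases h : b = y
  · simp [h]
  · simp [h]

lemma sum_sum_ind_mul (x y : V) (g : V → V → ℝ) :
    ∑ a, ∑ b, ind x y a b * g a b = g x y := by
  unfold ind
  rw [Finset.sum_eq_single x]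
  · rw [Finset.sum_eq_single y]
    · simp
    · intro b _ hb; simp [hb]
    · intro h; exact absurd (Finset.mem_univ y) h
  · intro a _ ha
    apply Finset.sum_eq_zero
    intro b _
    simp [ha]
  · intro h; exact absurd (Finset.mem_univ x) h

/-- The multiplicity-flow extraction from a residual walk. -/
lemma reach_flow {d π : V → V → ℝ} {y₀ : V} {w : V ⊕ V} {c : ℝ}
    (h : Reach d π y₀ w c) :
    ∃ F B : V → V → ℝ,
      (∀ x y, 0 ≤ F x y) ∧ (∀ x y, 0 ≤ B x y) ∧
      (∀ x y, B x y ≠ 0 → 0 < π x y) ∧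
      c = ∑ x, ∑ y, (F x y - B x y) * d x y ∧
      (∀ a, ∑ y, (F a y - B a y) =
        (match w with
          | Sum.inl x => -(if a = x then (1:ℝ) else 0)
          | Sum.inr _ => 0)) ∧
      (∀ v, ∑ x, (F x v - B x v) =
        (match w with
          | Sum.inl _ => -(if v = y₀ then (1:ℝ) else 0)
          | Sum.inr z => (if v = z then 1 else 0) - (if v = y₀ then 1 else 0))) := by
  induction h with
  | base =>
      exact ⟨(fun _ _ => 0), (fun _ _ => 0), fun _ _ => le_refl _, fun _ _ => le_refl _,
        fun x y h => absurd rfl h, by simp, fun a => by simp, fun v => by simp⟩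
  | @back y c x hr hπ ih =>
      obtain ⟨F, B, hF, hB, hBπ, hc, hrow, hcol⟩ := ih
      refine ⟨F, (fun a b => B a b + ind x y a b), hF,
        (fun a b => add_nonneg (hB a b) (ind_nonneg x y a b)), ?_, ?_, ?_, ?_⟩
      · intro a b hab
        by_cases h1 : B a b = 0
        · have h2 : ind x y a b ≠ 0 := fun h' => hab (by simp [h1, h'])
          have : a = x ∧ b = y := by
            by_contra hcon; exact h2 (by simp [ind, hcon])
          rw [this.1, this.2]; exact hπ
        · exact hBπ a b h1
      · have : ∀ a b, (F a b - (B a b + ind x y a b)) * d a b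
            = (F a b - B a b) * d a b - ind x y a b * d a b := by
          intro a b; ring
        simp only [this, Finset.sum_sub_distrib, ← hc, sum_sum_ind_mul]
      · intro a
        have : ∀ b, F a b - (B a b + ind x y a b) = (F a b - B a b) - ind x y a b := by
          intro b; ring
        simp only [this, Finset.sum_sub_distrib, hrow a, sum_ind_right]
        simp
      · intro v
        have : ∀ a, F a v - (B a v + ind x y a v) = (F a v - B a v) - ind x y a v := by
          intro a; ring
        simp only [this, Finset.sum_sub_distrib, hcol v, sum_ind_left]
        by_cases hv : v = y <;> by_cases hv0 : v = y₀ <;> simp [hv, hv0]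
  | @fwd x c z hr ih =>
      obtain ⟨F, B, hF, hB, hBπ, hc, hrow, hcol⟩ := ih
      refine ⟨(fun a b => F a b + ind x z a b), B,
        (fun a b => add_nonneg (hF a b) (ind_nonneg x z a b)), hB, hBπ, ?_, ?_, ?_⟩
      · have : ∀ a b, (F a b + ind x z a b - B a b) * d a b
            = (F a b - B a b) * d a b + ind x z a b * d a b := by
          intro a b; ring
        simp only [this, Finset.sum_add_distrib, ← hc, sum_sum_ind_mul]
      · intro a
        have : ∀ b, F a b + ind x z a b - B a b = (F a b - B a b) + ind x z a b := by
          intro b; ring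
        simp only [this, Finset.sum_add_distrib, hrow a, sum_ind_right]
        simp
      · intro v
        have : ∀ a, F a v + ind x z a v - B a v = (F a v - B a v) + ind x z a v := by
          intro a; ring
        simp only [this, Finset.sum_add_distrib, hcol v, sum_ind_left]
        by_cases hv : v = z <;> by_cases hv0 : v = y₀ <;> simp [hv, hv0] <;> ring

/-- Key optimality lemma: a residual closed walk based at `y₀` has nonnegative cost. -/
lemma reach_start_nonneg {d π : V → V → ℝ} {ν₀ ν₁ : V → ℝ} {y₀ : V}
    (hd : ∀ x y, 0 ≤ d x y) (hπ : IsCoupling π ν₀ ν₁)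
    (hmin : ∀ π' : V → V → ℝ, IsCoupling π' ν₀ ν₁ →
      ∑ x, ∑ y, d x y * π x y ≤ ∑ x, ∑ y, d x y * π' x y)
    {c : ℝ} (h : Reach d π y₀ (Sum.inr y₀) c) : 0 ≤ c := by
  obtain ⟨F, B, hF, hB, hBπ, hc, hrow, hcol⟩ := reach_flow h
  have hrow' : ∀ a, ∑ y, (F a y - B a y) = 0 := fun a => hrow a
  have hcol' : ∀ v, ∑ x, (F x v - B x v) = 0 := by
    intro v
    rw [hcol v]; exact sub_self _
  by_cases hT : ∀ x y, B x y = 0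
  · rw [hc]
    apply Finset.sum_nonneg; intro x _
    apply Finset.sum_nonneg; intro y _
    rw [hT x y, sub_zero]
    exact mul_nonneg (hF x y) (hd x y)
  · push_neg at hT
    obtain ⟨x₁, y₁, hxy1⟩ := hT
    obtain ⟨pm, hpm, hpmin⟩ := Finset.exists_min_image
      (Finset.univ.filter (fun p : V × V => B p.1 p.2 ≠ 0)) (fun p => π p.1 p.2)
      ⟨(x₁, y₁), by simp [hxy1]⟩
    set mS := π pm.1 pm.2 with hmS
    have hmSpos : 0 < mS := hBπ pm.1 pm.2 (by simpa using (Finset.mem_filter.1 hpm).2)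
    have hmS_le : ∀ a b, B a b ≠ 0 → mS ≤ π a b := fun a b hab =>
      hpmin (a, b) (by simp [hab])
    set T := ∑ x, ∑ y, B x y with hTdef
    have hTnn : 0 ≤ T := Finset.sum_nonneg fun x _ => Finset.sum_nonneg fun y _ => hB x y
    have hBleT : ∀ a b, B a b ≤ T := by
      intro a b
      calc B a b ≤ ∑ y, B a y :=
            Finset.single_le_sum (fun y _ => hB a y) (Finset.mem_univ b)
        _ ≤ T := Finset.single_le_sum (f := fun x => ∑ y, B x y)
            (fun x _ => Finset.sum_nonneg fun y _ => hB x y) (Finset.mem_univ a)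
    set θ := mS / (1 + T) with hθdef
    have hθpos : 0 < θ := div_pos hmSpos (by linarith)
    have hθid : θ * (1 + T) = mS := by
      rw [hθdef, div_mul_cancel₀ _ (by linarith : (1 + T) ≠ 0)]
    have hθB : ∀ a b, θ * B a b ≤ π a b := by
      intro a b
      by_cases hb : B a b = 0
      · rw [hb, mul_zero]; exact (hπ.1 a b)
      · calc θ * B a b ≤ θ * (1 + T) := by
              apply mul_le_mul_of_nonneg_left _ hθpos.le
              linarith [hBleT a b]
          _ = mS := hθid
          _ ≤ π a b := hmS_le a b hb
    set π' := fun a b => π a b + θ * (F a b - B a b) with hπ'def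
    have hπ'c : IsCoupling π' ν₀ ν₁ := by
      refine ⟨fun a b => ?_, fun a => ?_, fun b => ?_⟩
      · have : θ * (F a b - B a b) = θ * F a b - θ * B a b := by ring
        simp only [hπ'def, this]
        have h1 : 0 ≤ θ * F a b := mul_nonneg hθpos.le (hF a b)
        linarith [hθB a b]
      · simp only [hπ'def]
        rw [Finset.sum_add_distrib, ← Finset.mul_sum, hrow' a, mul_zero, add_zero]
        exact hπ.2.1 a
      · simp only [hπ'def]
        rw [Finset.sum_add_distrib, ← Finset.mul_sum, hcol' b, mul_zero, add_zero]
        exact hπ.2.2 b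
    have hcost : ∑ x, ∑ y, d x y * π' x y
        = (∑ x, ∑ y, d x y * π x y) + θ * c := by
      simp only [hπ'def]
      rw [hc]
      rw [Finset.mul_sum, ← Finset.sum_add_distrib]
      apply Finset.sum_congr rfl; intro x _
      rw [Finset.mul_sum, ← Finset.sum_add_distrib]
      apply Finset.sum_congr rfl; intro y _
      ring
    have := hmin π' hπ'c
    rw [hcost] at this
    nlinarith [hθpos]

/-- Existence of an optimal coupling. -/
lemma exists_min_coupling (d : V → V → ℝ) (ν₀ ν₁ : V → ℝ)
    (h0 : ∀ x, 0 ≤ ν₀ x) (h1 : ∀ x, 0 ≤ ν₁ x)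
    (hs0 : ∑ x, ν₀ x = 1) (hs1 : ∑ x, ν₁ x = 1) :
    ∃ π : V → V → ℝ, IsCoupling π ν₀ ν₁ ∧ ∀ π' : V → V → ℝ, IsCoupling π' ν₀ ν₁ →
      ∑ x, ∑ y, d x y * π x y ≤ ∑ x, ∑ y, d x y * π' x y := by
  have hclosed : IsClosed {π : V → V → ℝ | IsCoupling π ν₀ ν₁} := by
    have hrepr : {π : V → V → ℝ | IsCoupling π ν₀ ν₁} =
        (⋂ x, ⋂ y, {π : V → V → ℝ | 0 ≤ π x y}) ∩
        ((⋂ x, {π : V → V → ℝ | ∑ y, π x y = ν₀ x}) ∩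
         (⋂ y, {π : V → V → ℝ | ∑ x, π x y = ν₁ y})) := by
      ext π
      simp only [Set.mem_setOf_eq, Set.mem_inter_iff, Set.mem_iInter, IsCoupling]
    rw [hrepr]
    refine IsClosed.inter ?_ (IsClosed.inter ?_ ?_)
    · exact isClosed_iInter fun x => isClosed_iInter fun y =>
        isClosed_le continuous_const ((continuous_apply y).comp (continuous_apply x))
    · exact isClosed_iInter fun x => isClosed_eq
        (continuous_finset_sum _ fun y _ => (continuous_apply y).comp (continuous_apply x))
        continuous_const
    · exact isClosed_iInter fun y => isClosed_eq
        (continuous_finset_sum _ fun x _ => (continuous_apply y).comp (continuous_apply x))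
        continuous_const
  have hsub : {π : V → V → ℝ | IsCoupling π ν₀ ν₁} ⊆
      Set.univ.pi (fun _ : V => Set.univ.pi fun _ : V => Set.Icc (0:ℝ) 1) := by
    intro π hπ
    intro x _
    intro y _
    refine ⟨hπ.1 x y, ?_⟩
    calc π x y ≤ ∑ y', π x y' :=
          Finset.single_le_sum (fun y' _ => hπ.1 x y') (Finset.mem_univ y)
      _ = ν₀ x := hπ.2.1 x
      _ ≤ ∑ x', ν₀ x' := Finset.single_le_sum (fun x' _ => h0 x') (Finset.mem_univ x)
      _ = 1 := hs0
  have hcomp : IsCompact {π : V → V → ℝ | IsCoupling π ν₀ ν₁} :=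
    IsCompact.of_isClosed_subset
      (isCompact_univ_pi fun _ => isCompact_univ_pi fun _ => isCompact_Icc)
      hclosed hsub
  have hne : {π : V → V → ℝ | IsCoupling π ν₀ ν₁}.Nonempty :=
    ⟨fun x y => ν₀ x * ν₁ y, isCoupling_prod h0 h1 hs0 hs1⟩
  have hcont : Continuous (fun π : V → V → ℝ => ∑ x, ∑ y, d x y * π x y) :=
    continuous_finset_sum _ fun x _ => continuous_finset_sum _ fun y _ =>
      continuous_const.mul ((continuous_apply y).comp (continuous_apply x))
  obtain ⟨π, hπmem, hπmin⟩ := hcomp.exists_isMinOn hne hcont.continuousOn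
  exact ⟨π, hπmem, fun π' hπ' => hπmin hπ'⟩

/-- Finite Kantorovich–Rubinstein duality (the hard direction, as an upper bound). -/
lemma wass_le_of_dual (d : V → V → ℝ) (hd0 : ∀ x, d x x = 0) (hdnn : ∀ x y, 0 ≤ d x y)
    (htri : ∀ x y z, d x z ≤ d x y + d y z)
    (ν₀ ν₁ : V → ℝ) (h0 : ∀ x, 0 ≤ ν₀ x) (h1 : ∀ x, 0 ≤ ν₁ x)
    (hs0 : ∑ x, ν₀ x = 1) (hs1 : ∑ x, ν₁ x = 1)
    (Bd : ℝ)
    (hB : ∀ f : V → ℝ, (∀ a b, f b - f a ≤ d a b) →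
      (∑ y, f y * ν₁ y) - (∑ x, f x * ν₀ x) ≤ Bd) :
    wass d ν₀ ν₁ ≤ Bd := by
  obtain ⟨π, hπ, hmin⟩ := exists_min_coupling d ν₀ ν₁ h0 h1 hs0 hs1
  have hsupp : ∃ x y, 0 < π x y := by
    by_contra hcon
    push_neg at hcon
    have hz : ∀ x y, π x y = 0 := fun x y => le_antisymm (hcon x y) (hπ.1 x y)
    have h10 : (1:ℝ) = 0 := by
      calc (1:ℝ) = ∑ x, ν₀ x := hs0.symm
        _ = ∑ x, ∑ y, π x y := Finset.sum_congr rfl fun x _ => (hπ.2.1 x).symm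
        _ = 0 := Finset.sum_eq_zero fun x _ => Finset.sum_eq_zero fun y _ => hz x y
    norm_num at h10
  obtain ⟨x₀, y₀, hx₀⟩ := hsupp
  set D := ∑ a, ∑ b, d a b with hD
  have hDnn : 0 ≤ D := Finset.sum_nonneg fun a _ => Finset.sum_nonneg fun b _ => hdnn a b
  have hdleD : ∀ a b, d a b ≤ D := by
    intro a b
    calc d a b ≤ ∑ b', d a b' :=
          Finset.single_le_sum (fun b' _ => hdnn a b') (Finset.mem_univ b)
      _ ≤ D := Finset.single_le_sum (f := fun a => ∑ b', d a b')
          (fun a' _ => Finset.sum_nonneg fun b' _ => hdnn a' b') (Finset.mem_univ a)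
  have hreach_inr : ∀ z, ∃ c, Reach d π y₀ (Sum.inr z) c := fun z =>
    ⟨_, (Reach.base.back hx₀).fwd z⟩
  have key : ∀ c : ℝ, Reach d π y₀ (Sum.inr y₀) c → 0 ≤ c := fun c h =>
    reach_start_nonneg hdnn hπ hmin h
  have lb_inl : ∀ x (c : ℝ), Reach d π y₀ (Sum.inl x) c → -(d x y₀) ≤ c := by
    intro x c h
    have := key _ (h.fwd y₀)
    linarith
  have lb_inr : ∀ z (c : ℝ), Reach d π y₀ (Sum.inr z) c → -D ≤ c := by
    intro z c h
    cases h with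
    | base => linarith
    | fwd z h' =>
        rename_i x' c'
        linarith [lb_inl x' c' h', hdnn x' z, hdleD x' y₀]
  have bddΦ : ∀ x, BddBelow {c : ℝ | Reach d π y₀ (Sum.inl x) c} :=
    fun x => ⟨-(d x y₀), fun c hc => lb_inl x c hc⟩
  have bddΨ : ∀ z, BddBelow {c : ℝ | Reach d π y₀ (Sum.inr z) c} :=
    fun z => ⟨-D, fun c hc => lb_inr z c hc⟩
  set φ := fun x => sInf {c : ℝ | Reach d π y₀ (Sum.inl x) c} with hφdef
  set ψ := fun z => sInf {c : ℝ | Reach d π y₀ (Sum.inr z) c} with hψdef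
  have neΨ : ∀ z, {c : ℝ | Reach d π y₀ (Sum.inr z) c}.Nonempty := fun z => hreach_inr z
  have neΦ : ∀ x, (∃ y, 0 < π x y) → {c : ℝ | Reach d π y₀ (Sum.inl x) c}.Nonempty := by
    rintro x ⟨y, hy⟩
    obtain ⟨c, hc⟩ := hreach_inr y
    exact ⟨c - d x y, hc.back hy⟩
  have hφ_lb : ∀ x, (∃ y, 0 < π x y) → -D ≤ φ x := by
    intro x hx
    apply le_csInf (neΦ x hx)
    intro c hc
    have := lb_inl x c hc
    have := hdleD x y₀
    linarith
  have relax1 : ∀ x y, 0 < π x y → φ x + d x y ≤ ψ y := by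
    intro x y hxy
    apply le_csInf (neΨ y)
    intro c hc
    have hmem : Reach d π y₀ (Sum.inl x) (c - d x y) := Reach.back hc hxy
    have := csInf_le (bddΦ x) hmem
    linarith
  have relax2 : ∀ x, (∃ y, 0 < π x y) → ∀ z, ψ z ≤ φ x + d x z := by
    intro x hx z
    have h1 : ∀ c ∈ {c : ℝ | Reach d π y₀ (Sum.inl x) c}, ψ z - d x z ≤ c := by
      intro c hc
      have hmem : Reach d π y₀ (Sum.inr z) (c + d x z) := Reach.fwd z hc
      have := csInf_le (bddΨ z) hmem
      linarith
    have := le_csInf (neΦ x hx) h1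
    linarith
  set f := fun z => sInf {c : ℝ | ∃ x, (∃ y, 0 < π x y) ∧ c = φ x + d x z} with hfdef
  have neF : ∀ z, {c : ℝ | ∃ x, (∃ y, 0 < π x y) ∧ c = φ x + d x z}.Nonempty :=
    fun z => ⟨φ x₀ + d x₀ z, x₀, ⟨y₀, hx₀⟩, rfl⟩
  have bddF : ∀ z, BddBelow {c : ℝ | ∃ x, (∃ y, 0 < π x y) ∧ c = φ x + d x z} := by
    intro z
    refine ⟨-D, ?_⟩
    rintro c ⟨x, hx, rfl⟩
    have := hφ_lb x hx
    have := hdnn x z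
    have := hDnn
    linarith
  have flip : ∀ a b, f b - f a ≤ d a b := by
    intro a b
    have h1 : ∀ c ∈ {c : ℝ | ∃ x, (∃ y, 0 < π x y) ∧ c = φ x + d x a}, f b - d a b ≤ c := by
      rintro c ⟨x, hx, rfl⟩
      have h2 : f b ≤ φ x + d x b := csInf_le (bddF b) ⟨x, hx, rfl⟩
      have := htri x a b
      linarith
    have := le_csInf (neF a) h1
    linarith
  have fsupp : ∀ x y, 0 < π x y → d x y ≤ f y - f x := by
    intro x y hxy
    have hx : ∃ y', 0 < π x y' := ⟨y, hxy⟩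
    have h1 : f x ≤ φ x := by
      have := csInf_le (bddF x) ⟨x, hx, rfl⟩
      rw [hd0 x] at this
      linarith
    have h2 : ψ y ≤ f y := by
      apply le_csInf (neF y)
      rintro c ⟨x', hx', rfl⟩
      exact relax2 x' hx' y
    have h3 := relax1 x y hxy
    linarith
  have hcost_le : ∑ x, ∑ y, d x y * π x y ≤ ∑ x, ∑ y, (f y - f x) * π x y := by
    apply Finset.sum_le_sum; intro x _
    apply Finset.sum_le_sum; intro y _
    rcases eq_or_lt_of_le (hπ.1 x y) with h | h
    · rw [← h, mul_zero, mul_zero]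
    · exact mul_le_mul_of_nonneg_right (fsupp x y h) h.le
  have hsplit : ∑ x, ∑ y, (f y - f x) * π x y
      = (∑ y, f y * ν₁ y) - (∑ x, f x * ν₀ x) := by
    have e1 : ∀ x, ∑ y, (f y - f x) * π x y = (∑ y, f y * π x y) - f x * ν₀ x := by
      intro x
      rw [← hπ.2.1 x, Finset.mul_sum, ← Finset.sum_sub_distrib]
      apply Finset.sum_congr rfl; intro y _; ring
    calc ∑ x, ∑ y, (f y - f x) * π x y
        = ∑ x, ((∑ y, f y * π x y) - f x * ν₀ x) := Finset.sum_congr rfl fun x _ => e1 x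
      _ = (∑ x, ∑ y, f y * π x y) - ∑ x, f x * ν₀ x := Finset.sum_sub_distrib _ _
      _ = (∑ y, f y * ν₁ y) - ∑ x, f x * ν₀ x := by
          congr 1
          rw [Finset.sum_comm]
          apply Finset.sum_congr rfl; intro y _
          rw [← Finset.mul_sum, hπ.2.2 y]
  calc wass d ν₀ ν₁ ≤ ∑ x, ∑ y, d x y * π x y := wass_le_cost hdnn hπ
    _ ≤ ∑ x, ∑ y, (f y - f x) * π x y := hcost_le
    _ = (∑ y, f y * ν₁ y) - (∑ x, f x * ν₀ x) := hsplit
    _ ≤ Bd := hB f flip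


end Aux


section Contract

variable {μ : V → V → ℝ} {m : V → ℝ}

lemma lap_apply (f : V → ℝ) (x : V) :
    lap μ m f x = f x - ∑ y, meanKer μ m x y * f y := by
  unfold lap lapMat
  rw [Matrix.sub_mulVec, Matrix.one_mulVec]
  simp [Matrix.mulVec, dotProduct]

lemma lap_sub (h f : V → ℝ) (x : V) :
    lap μ m h x - lap μ m f x
      = (h x - f x) - ∑ y, meanKer μ m x y * (h y - f y) := by
  rw [lap_apply, lap_apply]
  have : ∀ y, meanKer μ m x y * (h y - f y)
      = meanKer μ m x y * h y - meanKer μ m x y * f y := fun y => by ring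
  rw [Finset.sum_congr rfl fun y _ => this y, Finset.sum_sub_distrib]
  ring

/-- Bound on the Laplacian of a Lipschitz function. -/
lemma lap_bound (hG : IsGraph μ) (hm : ∀ x, 0 < m x)
    (hrow : ∀ x, 0 < ∑ z, μ x z) (hP : IsPerron μ m)
    {D : ℝ} (hD : ∀ a b, gdist μ a b ≤ D)
    {f : V → ℝ} (hf : ∀ a b, f b - f a ≤ gdist μ a b) (x : V) :
    |lap μ m f x| ≤ D := by
  rw [lap_apply]
  have key : f x - ∑ y, meanKer μ m x y * f y = ∑ y, meanKer μ m x y * (f x - f y) := by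
    have : ∀ y, meanKer μ m x y * (f x - f y)
        = meanKer μ m x y * f x - meanKer μ m x y * f y := fun y => by ring
    rw [Finset.sum_congr rfl fun y _ => this y, Finset.sum_sub_distrib, ← Finset.sum_mul,
      meanKer_rowsum hP hrow, one_mul]
  rw [key]
  rw [abs_le]
  constructor
  · have : ∀ y, -(meanKer μ m x y * D) ≤ meanKer μ m x y * (f x - f y) := by
      intro y
      have h1 : -(gdist μ x y) ≤ f x - f y := by linarith [hf x y]
      have h2 := meanKer_nonneg hG hm x y
      nlinarith [hD x y, gdist_nonneg μ x y]
    calc -D = -(1 * D) := by ring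
      _ = -(∑ y, meanKer μ m x y * D) := by
          rw [← Finset.sum_mul, meanKer_rowsum hP hrow]
      _ = ∑ y, -(meanKer μ m x y * D) := by rw [Finset.sum_neg_distrib]
      _ ≤ ∑ y, meanKer μ m x y * (f x - f y) := Finset.sum_le_sum fun y _ => this y
  · have : ∀ y, meanKer μ m x y * (f x - f y) ≤ meanKer μ m x y * D := by
      intro y
      have h1 : f x - f y ≤ gdist μ y x := hf y x
      have h2 := meanKer_nonneg hG hm x y
      nlinarith [hD y x]
    calc ∑ y, meanKer μ m x y * (f x - f y) ≤ ∑ y, meanKer μ m x y * D :=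
          Finset.sum_le_sum fun y _ => this y
      _ = 1 * D := by rw [← Finset.sum_mul, meanKer_rowsum hP hrow]
      _ = D := one_mul D

/-- The discrete-time gradient (Lipschitz) contraction coming from the curvature bound. -/
lemma grad_contract (hG : IsGraph μ) (hP : IsPerron μ m)
    (hrow : ∀ x, 0 < ∑ z, μ x z)
    {K ε : ℝ} (hK : 0 < K) (hε : 0 < ε) (hε2 : ε ≤ 1/2)
    (hcurv : ∀ x y : V, x ≠ y → K ≤ ricci μ m x y)
    {f : V → ℝ} (hf : ∀ a b, f b - f a ≤ gdist μ a b) (x y : V) :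
    (f y - ε * lap μ m f y) - (f x - ε * lap μ m f x)
      ≤ (1 - ε * K) * gdist μ x y := by
  by_cases hxy : x = y
  · subst hxy
    simp [gdist_self]
  · set d : ℝ := gdist μ x y with hd
    have hdpos : 0 < d := gdist_pos hG hxy
    set s : ℝ := d - (f y - f x) with hs
    have hsnn : 0 ≤ s := by
      have := hf x y
      simp only [hs]
      linarith
    set h : V → ℝ := fun z => max (f z) (f x + d - gdist μ z y) with hh
    have hLip : ∀ a b, h b - h a ≤ gdist μ a b := by
      intro a b
      have h1 : h b ≤ h a + gdist μ a b := by
        apply max_le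
        · have := hf a b
          have := le_max_left (f a) (f x + d - gdist μ a y)
          linarith
        · have htr := gdist_triangle hG a b y
          have := le_max_right (f a) (f x + d - gdist μ a y)
          linarith
      linarith
    have hhx : h x = f x := by
      simp only [hh, ← hd, add_sub_cancel_right, max_self]
    have hhy : h y = f x + d := by
      simp only [hh]
      rw [gdist_self, sub_zero]
      exact max_eq_right (by linarith [hf x y])
    have hgrad : (h y - h x) / gdist μ x y = 1 := by
      rw [hhy, hhx, ← hd]
      field_simp
      ring
    -- the curvature bound applies to h
    obtain ⟨D, hDb⟩ : ∃ D : ℝ, ∀ a b, gdist μ a b ≤ D := by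
      refine ⟨∑ a, ∑ b, gdist μ a b, fun a b => ?_⟩
      calc gdist μ a b ≤ ∑ b', gdist μ a b' :=
            Finset.single_le_sum (fun b' _ => gdist_nonneg μ a b') (Finset.mem_univ b)
        _ ≤ ∑ a', ∑ b', gdist μ a' b' := Finset.single_le_sum
            (f := fun a' => ∑ b', gdist μ a' b')
            (fun a' _ => Finset.sum_nonneg fun b' _ => gdist_nonneg μ a' b')
            (Finset.mem_univ a)
    have hDnn : 0 ≤ D := le_trans (gdist_nonneg μ x y) (hDb x y)
    have hbdd : BddBelow {r : ℝ | ∃ g : V → ℝ, (∀ a b, g b - g a ≤ gdist μ a b) ∧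
        (g y - g x) / gdist μ x y = 1 ∧
        r = (lap μ m g y - lap μ m g x) / gdist μ x y} := by
      refine ⟨-(2*D), ?_⟩
      rintro r ⟨g, hg, hgr, rfl⟩
      have h1 : |lap μ m g y| ≤ D := lap_bound hG hP.1 hrow hP hDb hg y
      have h2 : |lap μ m g x| ≤ D := lap_bound hG hP.1 hrow hP hDb hg x
      rw [abs_le] at h1 h2
      have hnum : -(2*D) ≤ lap μ m g y - lap μ m g x := by linarith
      have hd1 : (1:ℝ) ≤ gdist μ x y := gdist_one_le hG hxy
      rw [le_div_iff₀ hdpos]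
      nlinarith
    have hmem : (lap μ m h y - lap μ m h x) / gdist μ x y ∈
        {r : ℝ | ∃ g : V → ℝ, (∀ a b, g b - g a ≤ gdist μ a b) ∧
          (g y - g x) / gdist μ x y = 1 ∧
          r = (lap μ m g y - lap μ m g x) / gdist μ x y} := ⟨h, hLip, hgrad, rfl⟩
    have hKr : K ≤ (lap μ m h y - lap μ m h x) / gdist μ x y := by
      have := hcurv x y hxy
      unfold ricci at this
      exact le_trans this (csInf_le hbdd hmem)
    have hKd : K * d ≤ lap μ m h y - lap μ m h x := by
      rw [le_div_iff₀ hdpos] at hKr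
      linarith [hKr]
    -- bounds on g := h - f
    have hg_nonneg : ∀ z, 0 ≤ h z - f z := fun z => by
      have := le_max_left (f z) (f x + d - gdist μ z y)
      simp only [hh]
      linarith
    have hg_le : ∀ z, h z - f z ≤ s := by
      intro z
      have h1 : f x + d - gdist μ z y - f z ≤ s := by
        have := hf z y
        simp only [hs]
        linarith
      have h2 : f z - f z ≤ s := by linarith
      simp only [hh]
      rcases max_cases (f z) (f x + d - gdist μ z y) with ⟨he, _⟩ | ⟨he, _⟩
      · rw [he]; linarith
      · rw [he]; linarith
    have hgx : h x - f x = 0 := by rw [hhx]; ring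
    have hgy : h y - f y = s := by rw [hhy]; simp only [hs]; ring
    -- Laplacian of the difference
    have hsum_nonneg : 0 ≤ ∑ z, meanKer μ m y z * (h z - f z) :=
      Finset.sum_nonneg fun z _ => mul_nonneg (meanKer_nonneg hG hP.1 y z) (hg_nonneg z)
    have hsum_le : ∑ z, meanKer μ m x z * (h z - f z) ≤ s := by
      calc ∑ z, meanKer μ m x z * (h z - f z) ≤ ∑ z, meanKer μ m x z * s :=
            Finset.sum_le_sum fun z _ => mul_le_mul_of_nonneg_left (hg_le z)
              (meanKer_nonneg hG hP.1 x z)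
        _ = s := by rw [← Finset.sum_mul, meanKer_rowsum hP hrow, one_mul]
    have hlapdiff : lap μ m h y - lap μ m f y - (lap μ m h x - lap μ m f x) ≤ 2 * s := by
      rw [lap_sub, lap_sub, hgx, hgy]
      linarith
    have hlapf : K * d - 2 * s ≤ lap μ m f y - lap μ m f x := by linarith
    have hmul : ε * (K * d - 2 * s) ≤ ε * (lap μ m f y - lap μ m f x) :=
      mul_le_mul_of_nonneg_left hlapf hε.le
    have hfd : f y - f x = d - s := by simp only [hs]; ring
    calc (f y - ε * lap μ m f y) - (f x - ε * lap μ m f x)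
        = (f y - f x) - ε * (lap μ m f y - lap μ m f x) := by ring
      _ ≤ (d - s) - ε * (K * d - 2*s) := by rw [hfd]; linarith
      _ = (1 - ε * K) * d - (1 - 2*ε) * s := by ring
      _ ≤ (1 - ε * K) * d := by nlinarith
  
end Contract


section Couple

lemma pp_sub (a b : ℝ) : max (a - b) 0 - max (b - a) 0 = a - b := by
  rcases le_total a b with h | h
  · rw [max_eq_right (by linarith : a - b ≤ 0), max_eq_left (by linarith : (0:ℝ) ≤ b - a)]
    ring
  · rw [max_eq_left (by linarith : (0:ℝ) ≤ a - b), max_eq_right (by linarith : b - a ≤ 0)]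
    ring

lemma pp_add (a b : ℝ) : max (a - b) 0 + max (b - a) 0 = |a - b| := by
  rcases le_total a b with h | h
  · rw [max_eq_right (by linarith : a - b ≤ 0), max_eq_left (by linarith : (0:ℝ) ≤ b - a),
      abs_of_nonpos (by linarith : a - b ≤ 0)]
    ring
  · rw [max_eq_left (by linarith : (0:ℝ) ≤ a - b), max_eq_right (by linarith : b - a ≤ 0),
      abs_of_nonneg (by linarith : (0:ℝ) ≤ a - b)]
    ring

lemma sum_swap4 (g : V → V → V → V → ℝ) :
    ∑ u, ∑ v, ∑ x, ∑ y, g u v x y = ∑ x, ∑ y, ∑ u, ∑ v, g u v x y :=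
  calc ∑ u, ∑ v, ∑ x, ∑ y, g u v x y
      = ∑ u, ∑ x, ∑ v, ∑ y, g u v x y :=
        Finset.sum_congr rfl fun u _ => Finset.sum_comm
    _ = ∑ x, ∑ u, ∑ v, ∑ y, g u v x y := Finset.sum_comm
    _ = ∑ x, ∑ u, ∑ y, ∑ v, g u v x y :=
        Finset.sum_congr rfl fun x _ => Finset.sum_congr rfl fun u _ =>
          Finset.sum_comm
    _ = ∑ x, ∑ y, ∑ u, ∑ v, g u v x y :=
        Finset.sum_congr rfl fun x _ => Finset.sum_comm

lemma isCoupling_diag {ν : V → ℝ} (hν : ∀ x, 0 ≤ ν x) :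
    IsCoupling (fun u v => if u = v then ν u else 0) ν ν := by
  refine ⟨fun u v => ?_, fun u => ?_, fun v => ?_⟩
  · dsimp only; split
    · exact hν u
    · exact le_refl 0
  · simp
  · simp [Finset.sum_ite_eq']

lemma cost_diag {dd : V → V → ℝ} (hd0 : ∀ x, dd x x = 0) (ν : V → ℝ) :
    ∑ u, ∑ v, dd u v * (if u = v then ν u else 0) = 0 := by
  apply Finset.sum_eq_zero
  intro u _
  rw [Finset.sum_eq_single u]
  · rw [hd0 u, zero_mul]
  · intro v _ hv
    simp [Ne.symm hv]
  · intro h; exact absurd (Finset.mem_univ u) h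

lemma isCoupling_comp {π : V → V → ℝ} {ν₀ ν₁ : V → ℝ} (hπ : IsCoupling π ν₀ ν₁)
    (R : V → V → ℝ) (γ : V → V → V → V → ℝ)
    (hγ : ∀ x y, IsCoupling (γ x y) (R x) (R y)) :
    IsCoupling (fun u v => ∑ x, ∑ y, π x y * γ x y u v)
      (fun u => ∑ x, ν₀ x * R x u) (fun v => ∑ y, ν₁ y * R y v) := by
  refine ⟨fun u v => ?_, fun u => ?_, fun v => ?_⟩
  · exact Finset.sum_nonneg fun x _ => Finset.sum_nonneg fun y _ =>
      mul_nonneg (hπ.1 x y) ((hγ x y).1 u v)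
  · dsimp only
    rw [Finset.sum_comm]
    apply Finset.sum_congr rfl; intro x _
    rw [Finset.sum_comm]
    calc ∑ y, ∑ v, π x y * γ x y u v = ∑ y, π x y * R x u := by
          apply Finset.sum_congr rfl; intro y _
          rw [← Finset.mul_sum, (hγ x y).2.1 u]
      _ = ν₀ x * R x u := by rw [← Finset.sum_mul, hπ.2.1 x]
  · dsimp only
    rw [Finset.sum_comm]
    calc ∑ x, ∑ u, ∑ y, π x y * γ x y u v
        = ∑ x, ∑ y, π x y * R y v := by
          apply Finset.sum_congr rfl; intro x _
          rw [Finset.sum_comm]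
          apply Finset.sum_congr rfl; intro y _
          rw [← Finset.mul_sum, (hγ x y).2.2 v]
      _ = ∑ y, ∑ x, π x y * R y v := Finset.sum_comm
      _ = ∑ y, ν₁ y * R y v := by
          apply Finset.sum_congr rfl; intro y _
          rw [← Finset.sum_mul, hπ.2.2 y]
  
lemma cost_comp (dd : V → V → ℝ) (π : V → V → ℝ) (γ : V → V → V → V → ℝ) :
    ∑ u, ∑ v, dd u v * (∑ x, ∑ y, π x y * γ x y u v)
      = ∑ x, ∑ y, π x y * (∑ u, ∑ v, dd u v * γ x y u v) := by
  simp only [Finset.mul_sum]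
  rw [sum_swap4 (fun u v x y => dd u v * (π x y * γ x y u v))]
  apply Finset.sum_congr rfl; intro x _
  apply Finset.sum_congr rfl; intro y _
  apply Finset.sum_congr rfl; intro u _
  apply Finset.sum_congr rfl; intro v _
  ring

/-- Gluing two couplings along the middle marginal. -/
lemma glue_coupling {dd : V → V → ℝ} (htri : ∀ x y z, dd x z ≤ dd x y + dd y z)
    {a b c : V → ℝ} {π₁ π₂ : V → V → ℝ}
    (h₁ : IsCoupling π₁ a b) (h₂ : IsCoupling π₂ b c) :
    ∃ π : V → V → ℝ, IsCoupling π a c ∧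
      ∑ u, ∑ w, dd u w * π u w ≤
        (∑ u, ∑ v, dd u v * π₁ u v) + (∑ v, ∑ w, dd v w * π₂ v w) := by
  classical
  set T : V → V → V → ℝ :=
    fun u v w => if b v = 0 then 0 else π₁ u v * π₂ v w / b v with hTdef
  have hbnn : ∀ v, 0 ≤ b v := fun v => by
    rw [← h₁.2.2 v]; exact Finset.sum_nonneg fun u _ => h₁.1 u v
  have hTnn : ∀ u v w, 0 ≤ T u v w := by
    intro u v w
    simp only [hTdef]
    split
    · exact le_refl 0
    · exact div_nonneg (mul_nonneg (h₁.1 u v) (h₂.1 v w)) (hbnn v)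
  have hπ₁z : ∀ u v, b v = 0 → π₁ u v = 0 := by
    intro u v hv
    have h1 : π₁ u v ≤ b v := by
      rw [← h₁.2.2 v]
      exact Finset.single_le_sum (fun u' _ => h₁.1 u' v) (Finset.mem_univ u)
    have h2 := h₁.1 u v
    rw [hv] at h1
    linarith
  have hπ₂z : ∀ v w, b v = 0 → π₂ v w = 0 := by
    intro v w hv
    have h1 : π₂ v w ≤ b v := by
      rw [← h₂.2.1 v]
      exact Finset.single_le_sum (fun w' _ => h₂.1 v w') (Finset.mem_univ w)
    have h2 := h₂.1 v w
    rw [hv] at h1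
    linarith
  have hT1 : ∀ u v, ∑ w, T u v w = π₁ u v := by
    intro u v
    by_cases hv : b v = 0
    · simp only [hTdef, hv, if_true]
      rw [hπ₁z u v hv]
      simp
    · simp only [hTdef, hv, if_false]
      have : ∀ w, π₁ u v * π₂ v w / b v = (π₁ u v / b v) * π₂ v w := fun w => by ring
      rw [Finset.sum_congr rfl fun w _ => this w, ← Finset.mul_sum, h₂.2.1 v]
      field_simp
  have hT2 : ∀ v w, ∑ u, T u v w = π₂ v w := by
    intro v w
    by_cases hv : b v = 0
    · simp only [hTdef, hv, if_true]
      rw [hπ₂z v w hv]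
      simp
    · simp only [hTdef, hv, if_false]
      have : ∀ u, π₁ u v * π₂ v w / b v = π₁ u v * (π₂ v w / b v) := fun u => by ring
      rw [Finset.sum_congr rfl fun u _ => this u, ← Finset.sum_mul, h₁.2.2 v]
      field_simp
  refine ⟨fun u w => ∑ v, T u v w, ⟨fun u w => Finset.sum_nonneg fun v _ => hTnn u v w,
    fun u => ?_, fun w => ?_⟩, ?_⟩
  · rw [Finset.sum_comm]
    rw [Finset.sum_congr rfl fun v _ => hT1 u v]
    exact h₁.2.1 u
  · rw [Finset.sum_comm]
    rw [Finset.sum_congr rfl fun v _ => hT2 v w]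
    exact h₂.2.2 w
  · calc ∑ u, ∑ w, dd u w * ∑ v, T u v w
        = ∑ u, ∑ w, ∑ v, dd u w * T u v w := by
          apply Finset.sum_congr rfl; intro u _
          apply Finset.sum_congr rfl; intro w _
          rw [Finset.mul_sum]
      _ ≤ ∑ u, ∑ w, ∑ v, (dd u v + dd v w) * T u v w := by
          apply Finset.sum_le_sum; intro u _
          apply Finset.sum_le_sum; intro w _
          apply Finset.sum_le_sum; intro v _
          exact mul_le_mul_of_nonneg_right (htri u v w) (hTnn u v w)
      _ = (∑ u, ∑ w, ∑ v, dd u v * T u v w) + ∑ u, ∑ w, ∑ v, dd v w * T u v w := by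
          simp only [add_mul, Finset.sum_add_distrib]
      _ = (∑ u, ∑ v, dd u v * π₁ u v) + (∑ v, ∑ w, dd v w * π₂ v w) := by
          congr 1
          · calc ∑ u, ∑ w, ∑ v, dd u v * T u v w
                = ∑ u, ∑ v, ∑ w, dd u v * T u v w :=
                  Finset.sum_congr rfl fun u _ => Finset.sum_comm
              _ = ∑ u, ∑ v, dd u v * π₁ u v := by
                  apply Finset.sum_congr rfl; intro u _
                  apply Finset.sum_congr rfl; intro v _
                  rw [← Finset.mul_sum, hT1 u v]
          · calc ∑ u, ∑ w, ∑ v, dd v w * T u v w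
                = ∑ w, ∑ u, ∑ v, dd v w * T u v w := Finset.sum_comm
              _ = ∑ w, ∑ v, ∑ u, dd v w * T u v w :=
                  Finset.sum_congr rfl fun w _ => Finset.sum_comm
              _ = ∑ w, ∑ v, dd v w * π₂ v w := by
                  apply Finset.sum_congr rfl; intro w _
                  apply Finset.sum_congr rfl; intro v _
                  rw [← Finset.mul_sum, hT2 v w]
              _ = ∑ v, ∑ w, dd v w * π₂ v w := Finset.sum_comm

end Couple


section Step

variable {μ : V → V → ℝ} {m : V → ℝ}

/-- The explicit coupling realizing one heat-semigroup step. -/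
lemma step_coupling (hG : IsGraph μ) (hP : IsPerron μ m) (hrow : ∀ x, 0 < ∑ z, μ x z)
    {Λ ε : ℝ} (hΛ : 1 ≤ Λ) (hε : 0 < ε) (hε1 : ε ≤ 1)
    (hD : ∀ x y : V, (0 < μ x y ∨ 0 < μ y x) → max (gdist μ x y) (gdist μ y x) ≤ Λ)
    (ρ : V → ℝ) (hρ : ∀ x, 0 ≤ ρ x) :
    ∃ σ : V → V → ℝ,
      IsCoupling σ
        (fun v => ρ v * m v + ε * ∑ z, (m v * meanKer μ m v z) * (ρ z - ρ v))
        (fun v => ρ v * m v) ∧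
      ∑ u, ∑ v, gdist μ u v * σ u v
        ≤ ε * Λ / 2 * ∑ x, ∑ y, |ρ y - ρ x| * (m x * meanKer μ m x y) := by
  classical
  set w : V → V → ℝ := fun x y => m x * meanKer μ m x y with hw
  have hwnn : ∀ x y, 0 ≤ w x y := fun x y => w_nonneg hG hP.1 x y
  have hwsym : ∀ x y, w x y = w y x := fun x y => w_symm hP.1 x y
  have hwrow : ∀ x, ∑ y, w x y = m x := fun x => w_rowsum hP hrow x
  set dg : V → ℝ := fun u => ρ u * m u - ε * ∑ z, w u z * max (ρ u - ρ z) 0 with hdg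
  have hdgnn : ∀ u, 0 ≤ dg u := by
    intro u
    have h1 : ∑ z, w u z * max (ρ u - ρ z) 0 ≤ ρ u * m u := by
      calc ∑ z, w u z * max (ρ u - ρ z) 0 ≤ ∑ z, w u z * ρ u :=
            Finset.sum_le_sum fun z _ => mul_le_mul_of_nonneg_left
              (max_le (by linarith [hρ z]) (hρ u)) (hwnn u z)
        _ = ρ u * m u := by rw [← Finset.sum_mul, hwrow u]; ring
    have h2 : 0 ≤ ∑ z, w u z * max (ρ u - ρ z) 0 :=
      Finset.sum_nonneg fun z _ => mul_nonneg (hwnn u z) (le_max_right _ _)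
    have h3 : 0 ≤ ρ u * m u := by linarith
    have h4 : ε * ∑ z, w u z * max (ρ u - ρ z) 0 ≤ ε * (ρ u * m u) :=
      mul_le_mul_of_nonneg_left h1 hε.le
    simp only [hdg]
    nlinarith
  set σ : V → V → ℝ := fun u v =>
    ε * w u v * max (ρ v - ρ u) 0 + (if u = v then dg u else 0) with hσ
  have hrowsum : ∀ u, ∑ v, σ u v
      = ρ u * m u + ε * ∑ z, w u z * (ρ z - ρ u) := by
    intro u
    simp only [hσ]
    rw [Finset.sum_add_distrib]
    have e1 : ∑ v, (if u = v then dg u else 0) = dg u := by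
      simp [Finset.sum_ite_eq]
    have e2 : ∑ v, ε * w u v * max (ρ v - ρ u) 0
        = ε * ∑ v, w u v * max (ρ v - ρ u) 0 := by
      rw [Finset.mul_sum]
      exact Finset.sum_congr rfl fun v _ => by ring
    rw [e1, e2]
    have e3 : ∑ z, w u z * (ρ z - ρ u)
        = (∑ z, w u z * max (ρ z - ρ u) 0) - ∑ z, w u z * max (ρ u - ρ z) 0 := by
      rw [← Finset.sum_sub_distrib]
      apply Finset.sum_congr rfl; intro z _
      rw [← mul_sub, pp_sub (ρ z) (ρ u)]
    rw [e3]
    simp only [hdg]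
    ring
  have hcolsum : ∀ v, ∑ u, σ u v = ρ v * m v := by
    intro v
    simp only [hσ]
    rw [Finset.sum_add_distrib]
    have e1 : ∑ u, (if u = v then dg u else 0) = dg v := by
      simp [Finset.sum_ite_eq']
    have e2 : ∑ u, ε * w u v * max (ρ v - ρ u) 0
        = ε * ∑ z, w v z * max (ρ v - ρ z) 0 := by
      rw [Finset.mul_sum]
      apply Finset.sum_congr rfl; intro z _
      rw [hwsym z v]
      ring
    rw [e1, e2]
    simp only [hdg]
    ring
  refine ⟨σ, ⟨fun u v => ?_, hrowsum, hcolsum⟩, ?_⟩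
  · simp only [hσ]
    have h1 : 0 ≤ ε * w u v * max (ρ v - ρ u) 0 := by
      have := hwnn u v
      have := le_max_right (ρ v - ρ u) (0:ℝ)
      positivity
    have h2 : (0:ℝ) ≤ if u = v then dg u else 0 := by
      split
      · exact hdgnn u
      · exact le_refl 0
    linarith
  · have hsplit : ∑ u, ∑ v, gdist μ u v * σ u v
        = ∑ u, ∑ v, gdist μ u v * (ε * w u v * max (ρ v - ρ u) 0) := by
      simp only [hσ]
      apply Finset.sum_congr rfl; intro u _
      have : ∀ v, gdist μ u v * (ε * w u v * max (ρ v - ρ u) 0 + (if u = v then dg u else 0))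
          = gdist μ u v * (ε * w u v * max (ρ v - ρ u) 0)
            + gdist μ u v * (if u = v then dg u else 0) := fun v => by ring
      rw [Finset.sum_congr rfl fun v _ => this v, Finset.sum_add_distrib]
      have e0 : ∑ v, gdist μ u v * (if u = v then dg u else 0) = 0 := by
        rw [Finset.sum_eq_single u]
        · rw [gdist_self]; ring
        · intro v _ hv
          simp [Ne.symm hv]
        · intro h; exact absurd (Finset.mem_univ u) h
      rw [e0, add_zero]
    rw [hsplit]
    have hbound : ∑ u, ∑ v, gdist μ u v * (ε * w u v * max (ρ v - ρ u) 0)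
        ≤ ∑ u, ∑ v, Λ * (ε * w u v * max (ρ v - ρ u) 0) := by
      apply Finset.sum_le_sum; intro u _
      apply Finset.sum_le_sum; intro v _
      set t : ℝ := ε * w u v * max (ρ v - ρ u) 0 with ht
      have htnn : 0 ≤ t := by
        have := hwnn u v
        have := le_max_right (ρ v - ρ u) (0:ℝ)
        positivity
      rcases eq_or_lt_of_le htnn with h | h
      · rw [← h, mul_zero, mul_zero]
      · have hwpos : 0 < w u v := by
          rcases lt_or_ge 0 (w u v) with h' | h'
          · exact h'
          · exfalso
            have : w u v = 0 := le_antisymm h' (hwnn u v)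
            rw [ht, this] at h
            simp at h
        have hedge : 0 < μ u v ∨ 0 < μ v u := w_pos_edge hG hP.1 hwpos
        have hduv : gdist μ u v ≤ Λ :=
          le_trans (le_max_left _ _) (hD u v hedge)
        exact mul_le_mul_of_nonneg_right hduv htnn
    have hhalf : ∑ u, ∑ v, w u v * max (ρ v - ρ u) 0
        = (∑ x, ∑ y, |ρ y - ρ x| * w x y) / 2 := by
      have hS2 : ∑ u, ∑ v, w u v * max (ρ u - ρ v) 0
          = ∑ u, ∑ v, w u v * max (ρ v - ρ u) 0 := by
        rw [Finset.sum_comm]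
        apply Finset.sum_congr rfl; intro u _
        apply Finset.sum_congr rfl; intro v _
        rw [hwsym v u]
      have hsum : (∑ u, ∑ v, w u v * max (ρ v - ρ u) 0)
          + ∑ u, ∑ v, w u v * max (ρ u - ρ v) 0
          = ∑ x, ∑ y, |ρ y - ρ x| * w x y := by
        rw [← Finset.sum_add_distrib]
        apply Finset.sum_congr rfl; intro u _
        rw [← Finset.sum_add_distrib]
        apply Finset.sum_congr rfl; intro v _
        rw [← mul_add, pp_add (ρ v) (ρ u)]
        ring
      rw [hS2] at hsum
      linarith
    calc ∑ u, ∑ v, gdist μ u v * (ε * w u v * max (ρ v - ρ u) 0)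
        ≤ ∑ u, ∑ v, Λ * (ε * w u v * max (ρ v - ρ u) 0) := hbound
      _ = ε * Λ * ∑ u, ∑ v, w u v * max (ρ v - ρ u) 0 := by
          rw [Finset.mul_sum]
          apply Finset.sum_congr rfl; intro u _
          rw [Finset.mul_sum]
          apply Finset.sum_congr rfl; intro v _
          ring
      _ = ε * Λ / 2 * ∑ x, ∑ y, |ρ y - ρ x| * w x y := by
          rw [hhalf]
          ring

end Step


/-- Lemma 5.1: under a positive Ricci curvature bound and bounded jumps, the Wasserstein
distance from the Perron measure to `ρ·m` is controlled by the total variation of `ρ`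
along edges. -/
theorem wasserstein_density_bound {V : Type*} [Fintype V] [DecidableEq V] [Nonempty V]
    (μ : V → V → ℝ) (m : V → ℝ) (K Λ : ℝ)
    (hG : IsGraph μ) (hP : IsPerron μ m) (hK : 0 < K)
    (hcurv : ∀ x y : V, x ≠ y → K ≤ ricci μ m x y) (hΛ : 1 ≤ Λ)
    (hD : ∀ x y : V, (0 < μ x y ∨ 0 < μ y x) → max (gdist μ x y) (gdist μ y x) ≤ Λ) :
    ∀ ρ : V → ℝ, (∀ x, 0 ≤ ρ x) → ∑ x, ρ x * m x = 1 →
      wass (gdist μ) m (fun x => ρ x * m x)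
        ≤ (Λ / (2 * K)) * ∑ x, ∑ y, |ρ y - ρ x| * (m x * meanKer μ m x y) := by
  intro ρ hρ hρsum
  classical
  have hd0 : ∀ x : V, gdist μ x x = 0 := gdist_self μ
  have hdnn : ∀ x y : V, 0 ≤ gdist μ x y := gdist_nonneg μ
  have htri : ∀ x y z : V, gdist μ x z ≤ gdist μ x y + gdist μ y z := gdist_triangle hG
  have hΛ0 : 0 < Λ := by linarith
  set T := ∑ x, ∑ y, |ρ y - ρ x| * (m x * meanKer μ m x y) with hT
  have hTnn : 0 ≤ T :=
    Finset.sum_nonneg fun x _ => Finset.sum_nonneg fun y _ =>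
      mul_nonneg (abs_nonneg _) (w_nonneg hG hP.1 x y)
  by_cases htwo : ∀ x : V, ∃ y : V, y ≠ x
  swap
  · -- degenerate case: a single point
    push_neg at htwo
    obtain ⟨x₀, hx₀⟩ := htwo
    have huniv : (Finset.univ : Finset V) = {x₀} := by
      ext z; simp [hx₀ z]
    have hmx : m x₀ = 1 := by
      have h := hP.2.1; rwa [huniv, Finset.sum_singleton] at h
    have hρx : ρ x₀ * m x₀ = 1 := by
      have h := hρsum; rwa [huniv, Finset.sum_singleton] at h
    have hfun : (fun x => ρ x * m x) = m := by
      funext z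
      rw [hx₀ z, hρx, hmx]
    rw [hfun]
    have hwle : wass (gdist μ) m m ≤ 0 := by
      have hc := isCoupling_diag (V := V) (ν := m) (fun x => (hP.1 x).le)
      have h := wass_le_cost hdnn hc
      rwa [cost_diag hd0 m] at h
    have hrhs : 0 ≤ Λ / (2*K) * T := by positivity
    linarith
  · have hrow : ∀ x, 0 < ∑ z, μ x z := fun x => rowsum_pos hG (htwo x)
    set ε : ℝ := min (1/2) (1/(2*K)) with hεdef
    have hεpos : 0 < ε := lt_min (by norm_num) (by positivity)
    have hεhalf : ε ≤ 1/2 := min_le_left _ _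
    have hε1 : ε ≤ 1 := by linarith
    have hεK : ε * K ≤ 1/2 := by
      have h1 : ε ≤ 1/(2*K) := min_le_right _ _
      calc ε * K ≤ (1/(2*K)) * K := mul_le_mul_of_nonneg_right h1 hK.le
        _ = 1/2 := by field_simp
    have hεK1 : 0 ≤ 1 - ε * K := by linarith
    have hεKpos : 0 < ε * K := mul_pos hεpos hK
    set R : V → V → ℝ :=
      fun x u => (1-ε) * (if u = x then 1 else 0) + ε * meanKer μ m x u with hR
    have hRnn : ∀ x u, 0 ≤ R x u := by
      intro x u
      have h1 := meanKer_nonneg hG hP.1 x u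
      have h2 : (0:ℝ) ≤ if u = x then 1 else 0 := by split <;> norm_num
      have h3 : (0:ℝ) ≤ 1 - ε := by linarith
      simp only [hR]
      positivity
    have hRsum : ∀ x, ∑ u, R x u = 1 := by
      intro x
      simp only [hR]
      rw [Finset.sum_add_distrib, ← Finset.mul_sum, ← Finset.mul_sum,
        meanKer_rowsum hP hrow]
      rw [Finset.sum_ite_eq' Finset.univ x (fun _ => (1:ℝ))]
      simp
    have hmR : ∀ u, ∑ x, m x * R x u = m u := by
      intro u
      simp only [hR]
      have e1 : ∀ x, m x * ((1-ε) * (if u = x then 1 else 0) + ε * meanKer μ m x u)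
          = (1-ε) * (if u = x then m x else 0) + ε * (m x * meanKer μ m x u) := by
        intro x; by_cases h : u = x <;> simp [h] <;> ring
      rw [Finset.sum_congr rfl fun x _ => e1 x, Finset.sum_add_distrib,
        ← Finset.mul_sum, ← Finset.mul_sum]
      rw [Finset.sum_ite_eq Finset.univ u m]
      have e2 : ∑ x, m x * meanKer μ m x u = m u := by
        rw [Finset.sum_congr rfl fun x _ => w_symm hP.1 x u]
        rw [← Finset.mul_sum, meanKer_rowsum hP hrow, mul_one]
      rw [e2]
      simp
      ring
    have hRf : ∀ (f : V → ℝ) (z : V), ∑ u, f u * R z u = f z - ε * lap μ m f z := by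
      intro f z
      simp only [hR]
      have e1 : ∀ u, f u * ((1-ε) * (if u = z then 1 else 0) + ε * meanKer μ m z u)
          = (1-ε) * (if u = z then f u else 0) + ε * (meanKer μ m z u * f u) := by
        intro u; by_cases h : u = z <;> simp [h] <;> ring
      rw [Finset.sum_congr rfl fun u _ => e1 u, Finset.sum_add_distrib,
        ← Finset.mul_sum, ← Finset.mul_sum]
      rw [Finset.sum_ite_eq' Finset.univ z f]
      rw [lap_apply]
      simp
      ring
    have hρm_nn : ∀ x, 0 ≤ ρ x * m x := fun x => mul_nonneg (hρ x) (hP.1 x).le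
    set ν : V → ℝ := fun v => ∑ x, (ρ x * m x) * R x v with hν
    have hνnn : ∀ v, 0 ≤ ν v := fun v =>
      Finset.sum_nonneg fun x _ => mul_nonneg (hρm_nn x) (hRnn x v)
    have hνsum : ∑ v, ν v = 1 := by
      simp only [hν]
      rw [Finset.sum_comm]
      calc ∑ x, ∑ v, (ρ x * m x) * R x v = ∑ x, ρ x * m x := by
            apply Finset.sum_congr rfl; intro x _
            rw [← Finset.mul_sum, hRsum x, mul_one]
        _ = 1 := hρsum
    have hνeq : ν = fun v => ρ v * m v
        + ε * ∑ z, (m v * meanKer μ m v z) * (ρ z - ρ v) := by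
      funext v
      simp only [hν, hR]
      have e1 : ∀ x, (ρ x * m x) * ((1-ε) * (if v = x then 1 else 0) + ε * meanKer μ m x v)
          = (1-ε) * (if v = x then ρ x * m x else 0)
            + ε * ((m v * meanKer μ m v x) * ρ x) := by
        intro x
        have hw := w_symm (μ := μ) hP.1 x v
        by_cases h : v = x
        · rw [if_pos h, if_pos h]
          subst h
          ring
        · rw [if_neg h, if_neg h]
          linear_combination (ε * ρ x) * hw
      rw [Finset.sum_congr rfl fun x _ => e1 x, Finset.sum_add_distrib,
        ← Finset.mul_sum, ← Finset.mul_sum]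
      rw [Finset.sum_ite_eq Finset.univ v (fun x => ρ x * m x)]
      have e3 : ∑ z, (m v * meanKer μ m v z) * (ρ z - ρ v)
          = (∑ z, (m v * meanKer μ m v z) * ρ z) - ρ v * m v := by
        have : ∀ z, (m v * meanKer μ m v z) * (ρ z - ρ v)
            = (m v * meanKer μ m v z) * ρ z - ρ v * (m v * meanKer μ m v z) := fun z => by ring
        rw [Finset.sum_congr rfl fun z _ => this z, Finset.sum_sub_distrib,
          ← Finset.mul_sum, w_rowsum hP hrow]
      rw [e3]
      simp
      ring
    set W := wass (gdist μ) m (fun x => ρ x * m x) with hWdef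
    have hstep : ∀ η : ℝ, 0 < η → W ≤ ((1 - ε*K) * W + ε * Λ / 2 * T) + η := by
      intro η hη
      have hgamma : ∀ x y : V, ∃ γ : V → V → ℝ, IsCoupling γ (R x) (R y) ∧
          ∑ u, ∑ v, gdist μ u v * γ u v ≤ (1 - ε*K) * gdist μ x y + η/4 := by
        intro x y
        by_cases hxy : x = y
        · subst hxy
          refine ⟨fun u v => if u = v then R x u else 0, isCoupling_diag (hRnn x), ?_⟩
          rw [cost_diag hd0, gdist_self]
          have : (0:ℝ) < η/4 := by linarith
          nlinarith
        · have hwle : wass (gdist μ) (R x) (R y) ≤ (1 - ε*K) * gdist μ x y := by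
            apply wass_le_of_dual (gdist μ) hd0 hdnn htri (R x) (R y)
              (hRnn x) (hRnn y) (hRsum x) (hRsum y)
            intro f hf
            rw [hRf f y, hRf f x]
            have := grad_contract hG hP hrow hK hεpos hεhalf hcurv hf x y
            linarith
          have hne : {r : ℝ | ∃ π : V → V → ℝ, IsCoupling π (R x) (R y) ∧
              r = ∑ u, ∑ v, gdist μ u v * π u v}.Nonempty :=
            ⟨_, ⟨fun u v => R x u * R y v,
              isCoupling_prod (hRnn x) (hRnn y) (hRsum x) (hRsum y), rfl⟩⟩
          have hlt : wass (gdist μ) (R x) (R y) < (1 - ε*K) * gdist μ x y + η/4 := by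
            linarith
          obtain ⟨r, ⟨γ, hγ, rfl⟩, hrlt⟩ := exists_lt_of_csInf_lt hne hlt
          exact ⟨γ, hγ, hrlt.le⟩
      choose γ hγc hγcost using hgamma
      have hWne : {r : ℝ | ∃ π : V → V → ℝ, IsCoupling π m (fun x => ρ x * m x) ∧
          r = ∑ u, ∑ v, gdist μ u v * π u v}.Nonempty :=
        ⟨_, ⟨fun u v => m u * (ρ v * m v),
          isCoupling_prod (fun x => (hP.1 x).le) hρm_nn hP.2.1 hρsum, rfl⟩⟩
      have hWlt : wass (gdist μ) m (fun x => ρ x * m x) < W + η/4 := by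
        rw [← hWdef]; linarith
      obtain ⟨r, ⟨π, hπc, rfl⟩, hπlt⟩ := exists_lt_of_csInf_lt hWne hWlt
      have hπsum1 : ∑ x, ∑ y, π x y = 1 := by
        calc ∑ x, ∑ y, π x y = ∑ x, m x := Finset.sum_congr rfl fun x _ => hπc.2.1 x
          _ = 1 := hP.2.1
      have hcomp := isCoupling_comp hπc R γ hγc
      have hcomp' : IsCoupling (fun u v => ∑ x, ∑ y, π x y * γ x y u v) m ν := by
        have e0 : (fun u => ∑ x, m x * R x u) = m := funext hmR
        rw [e0] at hcomp
        exact hcomp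
      have hwmν : wass (gdist μ) m ν ≤ (1 - ε*K) * W + (1 - ε*K) * (η/4) + η/4 := by
        have h1 := wass_le_cost hdnn hcomp'
        have h2 : ∑ u, ∑ v, gdist μ u v * (∑ x, ∑ y, π x y * γ x y u v)
            = ∑ x, ∑ y, π x y * (∑ u, ∑ v, gdist μ u v * γ x y u v) :=
          cost_comp (gdist μ) π γ
        have h3 : ∑ x, ∑ y, π x y * (∑ u, ∑ v, gdist μ u v * γ x y u v)
            ≤ ∑ x, ∑ y, π x y * ((1 - ε*K) * gdist μ x y + η/4) := by
          apply Finset.sum_le_sum; intro x _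
          apply Finset.sum_le_sum; intro y _
          exact mul_le_mul_of_nonneg_left (hγcost x y) (hπc.1 x y)
        have h4 : ∑ x, ∑ y, π x y * ((1 - ε*K) * gdist μ x y + η/4)
            = (1 - ε*K) * (∑ x, ∑ y, gdist μ x y * π x y) + η/4 := by
          calc ∑ x, ∑ y, π x y * ((1 - ε*K) * gdist μ x y + η/4)
              = ∑ x, ∑ y, ((1-ε*K) * (gdist μ x y * π x y) + η/4 * π x y) := by
                apply Finset.sum_congr rfl; intro x _
                apply Finset.sum_congr rfl; intro y _
                ring
            _ = (1-ε*K) * (∑ x, ∑ y, gdist μ x y * π x y)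
                + η/4 * (∑ x, ∑ y, π x y) := by
                simp only [Finset.sum_add_distrib, ← Finset.mul_sum]
            _ = (1 - ε*K) * (∑ x, ∑ y, gdist μ x y * π x y) + η/4 := by
                rw [hπsum1, mul_one]
        have h5 : (1 - ε*K) * (∑ x, ∑ y, gdist μ x y * π x y)
            ≤ (1-ε*K) * (W + η/4) := mul_le_mul_of_nonneg_left hπlt.le hεK1
        have h6 : (1-ε*K) * (W + η/4) = (1-ε*K)*W + (1-ε*K)*(η/4) := by ring
        rw [h2] at h1
        linarith
      obtain ⟨σc, hσcoup, hσcost⟩ := step_coupling hG hP hrow hΛ hεpos hε1 hD ρ hρ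
      have hσc' : IsCoupling σc ν (fun x => ρ x * m x) := by
        rw [hνeq]
        exact hσcoup
      have hmνne : {r : ℝ | ∃ π : V → V → ℝ, IsCoupling π m ν ∧
          r = ∑ u, ∑ v, gdist μ u v * π u v}.Nonempty :=
        ⟨_, ⟨fun u v => m u * ν v,
          isCoupling_prod (fun x => (hP.1 x).le) hνnn hP.2.1 hνsum, rfl⟩⟩
      have hmνlt : wass (gdist μ) m ν < wass (gdist μ) m ν + η/4 := by linarith
      obtain ⟨r₁, ⟨π₁, hπ₁, rfl⟩, hπ₁lt⟩ := exists_lt_of_csInf_lt hmνne hmνlt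
      obtain ⟨piG, hpiG, hpiGcost⟩ := glue_coupling htri hπ₁ hσc'
      have hfinal : W ≤ ∑ u, ∑ v, gdist μ u v * piG u v := wass_le_cost hdnn hpiG
      have hη4 : (1 - ε*K) * (η/4) ≤ η/4 := by nlinarith
      linarith
    have hfin : W ≤ (1 - ε*K) * W + ε * Λ / 2 * T :=
      le_of_forall_pos_le_add hstep
    have h1 : ε * (K * W) ≤ ε * (Λ / 2 * T) := by nlinarith
    have hKW : K * W ≤ Λ / 2 * T := le_of_mul_le_mul_left h1 hεpos
    rw [div_mul_eq_mul_div, le_div_iff₀ (by positivity : (0:ℝ) < 2*K)]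
    nlinarith


end Chung
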